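/- Let p be a minor-monotone graph parameter. Then its clique-sum extension p* is also minor-monotone: for every graph G and every minor H of G, p*(H) ≤ p*(G). -/

import Mathlib

/-- `H` is a minor of `G`, witnessed by a minor model: a family of nonempty, pairwise
disjoint, connected branch sets, one per vertex of `H`, with edges of `H` realized by
edges of `G` between the corresponding branch sets. -/
def IsGraphMinor {W V : Type*} (H : SimpleGraph W) (G : SimpleGraph V) : Prop :=
  ∃ S : W → Set V,
    (∀ w, (S w).Nonempty) ∧
    (∀ w, (G.induce (S w)).Connected) ∧
    (∀ w w', w ≠ w' → Disjoint (S w) (S w')) ∧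
    (∀ w w', H.Adj w w' → ∃ x ∈ S w, ∃ y ∈ S w', G.Adj x y)

/-- The `(k × k)`-grid: vertices `[k] × [k]`, edges between pairs at `ℓ₁`-distance `1`. -/
def gridGraph (k : ℕ) : SimpleGraph (Fin k × Fin k) :=
  SimpleGraph.fromRel (fun a b => Nat.dist a.1.val b.1.val + Nat.dist a.2.val b.2.val = 1)

/-- `G` contains `H` as an `X`-rooted minor: a minor model in which every branch set
meets `X`. -/
def HasRootedMinor {V W : Type*} (G : SimpleGraph V) (X : Set V) (H : SimpleGraph W) : Prop :=
  ∃ S : W → Set V,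
    (∀ w, (S w ∩ X).Nonempty) ∧
    (∀ w, (G.induce (S w)).Connected) ∧
    (∀ w w', w ≠ w' → Disjoint (S w) (S w')) ∧
    (∀ w w', H.Adj w w' → ∃ x ∈ S w, ∃ y ∈ S w', G.Adj x y)

/-- The bidimensionality of `X` in `G`: the maximum `ℓ` such that `G` contains the
`(ℓ × ℓ)`-grid as an `X`-rooted minor. -/
noncomputable def bidim {V : Type*} (G : SimpleGraph V) (X : Set V) : ℕ :=
  sSup {ℓ : ℕ | HasRootedMinor G X (gridGraph ℓ)}

/-- A graph parameter: a function assigning a natural number to every (simple) graph. -/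
def GraphParam : Type 1 := {V : Type} → SimpleGraph V → ℕ

/-- A graph parameter is minor-monotone if it does not increase when passing to minors. -/
def MinorMonotone (p : GraphParam) : Prop :=
  ∀ {V W : Type} (G : SimpleGraph V) (H : SimpleGraph W), IsGraphMinor H G → p H ≤ p G

/-- A graph parameter is isomorphism-invariant. -/
def IsoInvariant (p : GraphParam) : Prop :=
  ∀ {V W : Type} (G : SimpleGraph V) (H : SimpleGraph W), Nonempty (G ≃g H) → p G = p H

/-- A tree decomposition of a graph `G` with nodes indexed by `ι`. -/
structure TreeDecomp {V : Type} (G : SimpleGraph V) (ι : Type) where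
  tree : SimpleGraph ι
  isTree : tree.IsTree
  bag : ι → Set V
  covers_vertex : ∀ v : V, ∃ t, v ∈ bag t
  covers_edge : ∀ ⦃u v : V⦄, G.Adj u v → ∃ t, u ∈ bag t ∧ v ∈ bag t
  subtree : ∀ v : V, (tree.induce {t | v ∈ bag t}).Connected

/-- The torso of a tree decomposition at a node `t`: the graph induced on the bag of `t`,
with all edges added between vertices lying in a common adhesion with a neighboring bag. -/
def TreeDecomp.torso {V ι : Type} {G : SimpleGraph V} (D : TreeDecomp G ι) (t : ι) :
    SimpleGraph (D.bag t) :=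
  SimpleGraph.fromRel (fun u v =>
    G.Adj (u : V) (v : V) ∨
      ∃ t', D.tree.Adj t t' ∧ (u : V) ∈ D.bag t' ∧ (v : V) ∈ D.bag t')

/-- The clique-sum extension of a graph parameter `p`:
`p*(G) ≤ k` iff `G` has a tree decomposition all of whose torsos `H` satisfy `p H ≤ k`. -/
noncomputable def cliqueSumExt (p : GraphParam) : GraphParam :=
  fun {V} G => sInf {k : ℕ | ∃ (ι : Type) (D : TreeDecomp G ι), ∀ t, p (D.torso t) ≤ k}

section CSEAux

open SimpleGraph

variable {γ : Type}

/-- From connectivity of an induced subgraph, extract a walk in the ambient graph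
whose support stays in the set. -/
lemma cse_exists_walk_of_induce_connected {T : SimpleGraph γ} {N : Set γ}
    (h : (T.induce N).Connected) {a b : γ} (ha : a ∈ N) (hb : b ∈ N) :
    ∃ p : T.Walk a b, ∀ s ∈ p.support, s ∈ N := by
  obtain ⟨q⟩ := h.preconnected ⟨a, ha⟩ ⟨b, hb⟩
  refine ⟨q.map (SimpleGraph.Embedding.induce N).toHom, ?_⟩
  intro s hs
  have hs := (show s ∈ (q.map (SimpleGraph.Embedding.induce N).toHom).support from hs)
  rw [SimpleGraph.Walk.support_map, List.mem_map] at hs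
  obtain ⟨x, -, rfl⟩ := hs
  exact x.2

/-- From a walk whose support stays in a set, get reachability in the induced subgraph. -/
lemma cse_induce_reachable_of_walk {T : SimpleGraph γ} {N : Set γ} :
    ∀ {a b : γ} (p : T.Walk a b), (∀ s ∈ p.support, s ∈ N) →
      ∀ (ha : a ∈ N) (hb : b ∈ N), (T.induce N).Reachable ⟨a, ha⟩ ⟨b, hb⟩ := by
  intro a b p
  induction p with
  | nil => intro _ ha hb; exact SimpleGraph.Reachable.refl _
  | @cons u m w h q ih =>
    intro hs ha hb
    have hm : m ∈ N := hs m (by simp [SimpleGraph.Walk.support_cons,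
      SimpleGraph.Walk.start_mem_support])
    have hadj : (T.induce N).Adj ⟨u, ha⟩ ⟨m, hm⟩ := h
    exact hadj.reachable.trans
      (ih (fun s hsm => hs s (by simp [SimpleGraph.Walk.support_cons, hsm])) hm hb)

end CSEAux

section CSETD

open SimpleGraph

variable {V ι : Type} {G : SimpleGraph V} (D : TreeDecomp G ι)

/-- A vertex in two bags and not in the bag of `t` yields a tree walk avoiding `t`. -/
lemma cse_walk_avoiding {x : V} {a b t : ι} (hxa : x ∈ D.bag a) (hxb : x ∈ D.bag b)
    (hxt : x ∉ D.bag t) : ∃ p : D.tree.Walk a b, t ∉ p.support := by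
  obtain ⟨p, hp⟩ := cse_exists_walk_of_induce_connected (D.subtree x) hxa hxb
  exact ⟨p, fun h => hxt (hp t h)⟩

/-- If `x` lies in the bags of `s ≠ t` and of `t`, there is a neighbour `t'` of `t`
with `x` in its bag and a tree walk from `s` to `t'` avoiding `t`. -/
lemma cse_exists_nbr {x : V} {s t : ι} (hxs : x ∈ D.bag s) (hxt : x ∈ D.bag t)
    (hst : s ≠ t) :
    ∃ t', D.tree.Adj t t' ∧ x ∈ D.bag t' ∧ ∃ p : D.tree.Walk s t', t ∉ p.support := by
  classical
  obtain ⟨p0, hp0⟩ := cse_exists_walk_of_induce_connected (D.subtree x) hxs hxt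
  have hq : ∀ z ∈ p0.bypass.support, x ∈ D.bag z :=
    fun z hz => hp0 z (SimpleGraph.Walk.support_bypass_subset _ hz)
  have hqp : p0.bypass.IsPath := SimpleGraph.Walk.bypass_isPath p0
  obtain ⟨t', h, r, hr⟩ := SimpleGraph.Walk.exists_eq_cons_of_ne hst.symm p0.bypass.reverse
  have hrev : p0.bypass.reverse.IsPath := (SimpleGraph.Walk.isPath_reverse_iff _).2 hqp
  rw [hr, SimpleGraph.Walk.cons_isPath_iff] at hrev
  refine ⟨t', h, ?_, ⟨r.reverse, ?_⟩⟩
  · have : t' ∈ p0.bypass.reverse.support := by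
      rw [hr]; simp [SimpleGraph.Walk.support_cons, SimpleGraph.Walk.start_mem_support]
    rw [SimpleGraph.Walk.support_reverse, List.mem_reverse] at this
    exact hq _ this
  · rw [SimpleGraph.Walk.support_reverse, List.mem_reverse]
    exact hrev.2

/-- Two neighbours of `t` joined by a walk avoiding `t` are equal. -/
lemma cse_nbr_unique {t t1 t2 : ι} (h1 : D.tree.Adj t t1) (h2 : D.tree.Adj t t2)
    (hc : ∃ p : D.tree.Walk t1 t2, t ∉ p.support) : t1 = t2 := by
  classical
  obtain ⟨p, hp⟩ := hc
  have hqp : p.bypass.IsPath := SimpleGraph.Walk.bypass_isPath p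
  have hqt : t ∉ p.bypass.support :=
    fun h => hp (SimpleGraph.Walk.support_bypass_subset _ h)
  have hA : (SimpleGraph.Walk.cons h2 SimpleGraph.Walk.nil).IsPath := by
    rw [SimpleGraph.Walk.cons_isPath_iff]
    exact ⟨SimpleGraph.Walk.IsPath.nil, by simp [h2.ne]⟩
  have hB : (SimpleGraph.Walk.cons h1 p.bypass).IsPath := hqp.cons hqt
  have heq := (D.isTree.existsUnique_path t t2).unique hB hA
  have := congrArg (fun (w : D.tree.Walk t t2) => w.getVert 1) heq
  simpa using this

/-- Every node is joined, avoiding the edge `s(t,t')`, to `t` or to `t'`. -/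
lemma cse_side_total {t t' : ι} (ht : D.tree.Adj t t') (s : ι) :
    (∃ p : D.tree.Walk s t, s(t, t') ∉ p.edges) ∨
      (∃ p : D.tree.Walk s t', s(t, t') ∉ p.edges) := by
  classical
  obtain ⟨w⟩ := D.isTree.isConnected.preconnected s t
  have hq : w.bypass.IsPath := SimpleGraph.Walk.bypass_isPath w
  by_cases h : t' ∈ w.bypass.support
  · right
    refine ⟨w.bypass.takeUntil t' h, fun he => ?_⟩
    have hts : t ∈ (w.bypass.takeUntil t' h).support :=
      SimpleGraph.Walk.fst_mem_support_of_mem_edges _ he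
    have hspec := SimpleGraph.Walk.take_spec w.bypass h
    have hnodup : w.bypass.support.Nodup := hq.support_nodup
    rw [← hspec, SimpleGraph.Walk.support_append] at hnodup
    have hdisj := List.disjoint_of_nodup_append hnodup
    have htd : t ∈ (w.bypass.dropUntil t' h).support.tail := by
      have h1 : t ∈ (w.bypass.dropUntil t' h).support :=
        SimpleGraph.Walk.end_mem_support _
      have h2 := SimpleGraph.Walk.support_eq_cons (w.bypass.dropUntil t' h)
      rw [h2] at h1
      rcases List.mem_cons.1 h1 with h1 | h1
      · exact absurd h1.symm ht.ne'
      · exact h1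
    exact hdisj hts htd
  · left
    exact ⟨w.bypass, fun he =>
      h (SimpleGraph.Walk.snd_mem_support_of_mem_edges _ he)⟩

/-- There is no walk from `t` to `t'` avoiding the tree edge `s(t,t')`. -/
lemma cse_side_not_both {t t' : ι} (ht : D.tree.Adj t t') :
    ¬ ∃ p : D.tree.Walk t t', s(t, t') ∉ p.edges := by
  classical
  rintro ⟨p, hp⟩
  have hq : p.bypass.IsPath := SimpleGraph.Walk.bypass_isPath p
  have hqe : s(t, t') ∉ p.bypass.edges :=
    fun h => hp (SimpleGraph.Walk.edges_bypass_subset _ h)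
  have hA : (SimpleGraph.Walk.cons ht SimpleGraph.Walk.nil).IsPath := by
    rw [SimpleGraph.Walk.cons_isPath_iff]
    exact ⟨SimpleGraph.Walk.IsPath.nil, by simp [ht.ne]⟩
  have heq := (D.isTree.existsUnique_path t t').unique hq hA
  rw [heq] at hqe
  simp at hqe

/-- A vertex with bags on both sides of a tree edge lies in both endpoint bags. -/
lemma cse_mem_both_bags {t t' a b : ι} (ht : D.tree.Adj t t') {x : V}
    (hxa : x ∈ D.bag a) (hxb : x ∈ D.bag b)
    (hat : ∃ p : D.tree.Walk a t, s(t, t') ∉ p.edges)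
    (hbt : ∃ p : D.tree.Walk b t', s(t, t') ∉ p.edges) :
    x ∈ D.bag t ∧ x ∈ D.bag t' := by
  obtain ⟨p, hp⟩ := cse_exists_walk_of_induce_connected (D.subtree x) hxa hxb
  obtain ⟨pa, hpa⟩ := hat
  obtain ⟨pb, hpb⟩ := hbt
  have key : s(t, t') ∈ p.edges := by
    by_contra he
    refine cse_side_not_both D ht ⟨(pa.reverse.append p).append pb, ?_⟩
    rw [SimpleGraph.Walk.edges_append, SimpleGraph.Walk.edges_append,
      SimpleGraph.Walk.edges_reverse]
    simp only [List.mem_append, List.mem_reverse]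
    rintro (⟨h | h⟩ | h)
    exacts [hpa h, he h, hpb h]
  exact ⟨hp t (SimpleGraph.Walk.fst_mem_support_of_mem_edges _ key),
    hp t' (SimpleGraph.Walk.snd_mem_support_of_mem_edges _ key)⟩

/-- helper for `cse_connected_meets_adhesion` -/
lemma cse_adhesion_aux {t t' : ι} (ht : D.tree.Adj t t') {C : Set V} :
    ∀ {x y : V} (p : G.Walk x y), (∀ z ∈ p.support, z ∈ C) →
      (∃ s, x ∈ D.bag s ∧ ∃ q : D.tree.Walk s t, s(t, t') ∉ q.edges) →
      y ∈ D.bag t' → ∃ z ∈ C, z ∈ D.bag t ∧ z ∈ D.bag t' := by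
  intro x y p
  induction p with
  | nil =>
    rintro hC ⟨s, hxs, hside⟩ hyt'
    rename_i x
    have hx : x ∈ D.bag t ∧ x ∈ D.bag t' :=
      cse_mem_both_bags D ht hxs hyt' hside ⟨SimpleGraph.Walk.nil, by simp⟩
    exact ⟨x, hC x (by simp), hx⟩
  | @cons u m w h q ih =>
    rintro hC ⟨s, hxs, hside⟩ hyt'
    obtain ⟨s0, hus0, hms0⟩ := D.covers_edge h
    rcases cse_side_total D ht s0 with hs0 | hs0
    · exact ih (fun z hz => hC z (by simp [SimpleGraph.Walk.support_cons, hz]))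
        ⟨s0, hms0, hs0⟩ hyt'
    · have hu : u ∈ D.bag t ∧ u ∈ D.bag t' :=
        cse_mem_both_bags D ht hxs hus0 hside hs0
      exact ⟨u, hC u (by simp [SimpleGraph.Walk.support_cons,
        SimpleGraph.Walk.start_mem_support]), hu⟩

/-- A connected set meeting two adjacent bags meets their adhesion. -/
lemma cse_connected_meets_adhesion {C : Set V} (hC : (G.induce C).Connected) {t t' : ι}
    (ht : D.tree.Adj t t') {x y : V} (hx : x ∈ C) (hxt : x ∈ D.bag t) (hy : y ∈ C)
    (hyt : y ∈ D.bag t') : ∃ z ∈ C, z ∈ D.bag t ∧ z ∈ D.bag t' := by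
  obtain ⟨p, hp⟩ := cse_exists_walk_of_induce_connected hC hx hy
  exact cse_adhesion_aux D ht p hp ⟨t, hxt, SimpleGraph.Walk.nil, by simp⟩ hyt

end CSETD

section CSETorso

open SimpleGraph

variable {V ι : Type} {G : SimpleGraph V} (D : TreeDecomp G ι)

lemma cse_torso_adj {t : ι} (a b : D.bag t) :
    (D.torso t).Adj a b ↔ a ≠ b ∧
      ((G.Adj (a : V) (b : V) ∨
          ∃ t', D.tree.Adj t t' ∧ (a : V) ∈ D.bag t' ∧ (b : V) ∈ D.bag t') ∨
        (G.Adj (b : V) (a : V) ∨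
          ∃ t', D.tree.Adj t t' ∧ (b : V) ∈ D.bag t' ∧ (a : V) ∈ D.bag t')) := by
  unfold TreeDecomp.torso
  exact SimpleGraph.fromRel_adj _ _ _

/-- Walk ending lemma: a walk leaving `x ∉ bag t` and ending in `bag t`, with interior
outside `bag t`, ends in the bag of a neighbour `t2` of `t`, reachable avoiding `t`. -/
lemma cse_inner {t : ι} :
    ∀ {a v : V} (r : G.Walk a v), a ∉ D.bag t → v ∈ D.bag t →
      (∀ z ∈ r.support, z ≠ v → z ∉ D.bag t) →
      ∀ {sa : ι}, a ∈ D.bag sa →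
      ∃ t2, D.tree.Adj t t2 ∧ v ∈ D.bag t2 ∧ ∃ p : D.tree.Walk sa t2, t ∉ p.support := by
  intro a v r
  induction r with
  | nil =>
    intro ha hv
    exact absurd hv ha
  | @cons a m v h r ih =>
    intro ha hv hsup sa hsa
    obtain ⟨s0, has0, hms0⟩ := D.covers_edge h
    have hs0t : s0 ≠ t := fun he => ha (he ▸ has0)
    obtain ⟨p1, hp1⟩ := cse_walk_avoiding D hsa has0 ha
    by_cases hm : m ∈ D.bag t
    · have hmv : m = v := by
        by_contra hne
        exact hsup m (by simp [SimpleGraph.Walk.support_cons,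
          SimpleGraph.Walk.start_mem_support]) hne hm
      subst hmv
      obtain ⟨t2, ht2, hvt2, p2, hp2⟩ := cse_exists_nbr D hms0 hm hs0t
      refine ⟨t2, ht2, hvt2, p1.append p2, ?_⟩
      rw [SimpleGraph.Walk.mem_support_append_iff]
      rintro (hh | hh)
      exacts [hp1 hh, hp2 hh]
    · obtain ⟨t2, ht2, hvt2, p2, hp2⟩ := ih hm hv
        (fun z hz => hsup z (by simp [SimpleGraph.Walk.support_cons, hz])) hms0
      refine ⟨t2, ht2, hvt2, p1.append p2, ?_⟩
      rw [SimpleGraph.Walk.mem_support_append_iff]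
      rintro (hh | hh)
      exacts [hp1 hh, hp2 hh]

lemma cse_shortcut_path {t : ι} {u v : V} (q : G.Walk u v) (hq : q.IsPath) (huv : u ≠ v)
    (hu : u ∈ D.bag t) (hv : v ∈ D.bag t)
    (hsup : ∀ z ∈ q.support, z ≠ u → z ≠ v → z ∉ D.bag t) :
    (D.torso t).Adj ⟨u, hu⟩ ⟨v, hv⟩ := by
  have hne : (⟨u, hu⟩ : D.bag t) ≠ ⟨v, hv⟩ := fun hh => huv (congrArg Subtype.val hh)
  cases q with
  | nil => exact absurd rfl huv
  | @cons _ m _ h r =>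
    rw [SimpleGraph.Walk.cons_isPath_iff] at hq
    by_cases hm : m ∈ D.bag t
    · have hmv : m = v := by
        by_contra hmv
        have hmu : m ≠ u := fun hh => hq.2 (hh ▸ SimpleGraph.Walk.start_mem_support r)
        exact hsup m (by simp [SimpleGraph.Walk.support_cons,
          SimpleGraph.Walk.start_mem_support]) hmu hmv hm
      subst hmv
      exact (cse_torso_adj D _ _).2 ⟨hne, Or.inl (Or.inl h)⟩
    · obtain ⟨s0, hus0, hms0⟩ := D.covers_edge h
      have hs0t : s0 ≠ t := fun he => hm (he ▸ hms0)
      obtain ⟨t1, ht1, hut1, p1, hp1⟩ := cse_exists_nbr D hus0 hu hs0t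
      obtain ⟨t2, ht2, hvt2, p2, hp2⟩ := cse_inner D r hm hv
        (fun z hz hzv => by
          have hzu : z ≠ u := fun hh => hq.2 (hh ▸ hz)
          exact hsup z (by simp [SimpleGraph.Walk.support_cons, hz]) hzu hzv) hms0
      have ht12 : t1 = t2 := by
        refine cse_nbr_unique D ht1 ht2 ⟨p1.reverse.append p2, ?_⟩
        rw [SimpleGraph.Walk.mem_support_append_iff, SimpleGraph.Walk.support_reverse,
          List.mem_reverse]
        rintro (hh | hh)
        exacts [hp1 hh, hp2 hh]
      exact (cse_torso_adj D _ _).2 ⟨hne, Or.inl (Or.inr ⟨t1, ht1, hut1, ht12 ▸ hvt2⟩)⟩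

lemma cse_shortcut {t : ι} {u v : V} (q : G.Walk u v)
    (hu : u ∈ D.bag t) (hv : v ∈ D.bag t)
    (hsup : ∀ z ∈ q.support, z ≠ u → z ≠ v → z ∉ D.bag t) :
    u = v ∨ (D.torso t).Adj ⟨u, hu⟩ ⟨v, hv⟩ := by
  classical
  by_cases huv : u = v
  · exact Or.inl huv
  · exact Or.inr (cse_shortcut_path D q.bypass q.bypass_isPath huv hu hv
      (fun z hz => hsup z (SimpleGraph.Walk.support_bypass_subset _ hz)))

/-- From a `G`-walk inside `C` between two bag-`t` vertices, get a torso walk inside `C`. -/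
lemma cse_torso_walk_aux {t : ι} {C : Set V} :
    ∀ {x y : V} (p : G.Walk x y), (∀ z ∈ p.support, z ∈ C) →
      ∀ {u : V} (q : G.Walk u x), (∀ z ∈ q.support, z ∈ C) →
        (∀ z ∈ q.support, z ≠ u → z ∉ D.bag t) →
        ∀ (hu : u ∈ D.bag t) (hy : y ∈ D.bag t),
        ∃ r : (D.torso t).Walk ⟨u, hu⟩ ⟨y, hy⟩, ∀ z ∈ r.support, (z : V) ∈ C := by
  intro x y p
  induction p with
  | nil =>
    rename_i x
    intro _ u q hqC hqb hu hy
    have hxu : x = u := by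
      by_contra hne
      exact hqb x (SimpleGraph.Walk.end_mem_support q) hne hy
    subst hxu
    refine ⟨SimpleGraph.Walk.nil, ?_⟩
    intro z hz
    rw [SimpleGraph.Walk.support_nil, List.mem_singleton] at hz
    subst hz
    exact hqC x (SimpleGraph.Walk.start_mem_support q)
  | @cons x m y h p' ih =>
    intro hpC u q hqC hqb hu hy
    have hpC' : ∀ z ∈ p'.support, z ∈ C :=
      fun z hz => hpC z (by simp [SimpleGraph.Walk.support_cons, hz])
    have hmC : m ∈ C := hpC m (by simp [SimpleGraph.Walk.support_cons,
      SimpleGraph.Walk.start_mem_support])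
    by_cases hm : m ∈ D.bag t
    · have short := cse_shortcut D (q.concat h) hu hm (by
        intro z hz hzu hzm
        rw [SimpleGraph.Walk.support_concat, List.mem_append, List.mem_singleton] at hz
        rcases hz with hz | hz
        · exact hqb z hz hzu
        · exact absurd hz hzm)
      obtain ⟨r2, hr2⟩ := ih hpC' (SimpleGraph.Walk.nil : G.Walk m m)
        (by intro z hz; rw [SimpleGraph.Walk.support_nil, List.mem_singleton] at hz;
            subst hz; exact hmC)
        (by intro z hz hne; rw [SimpleGraph.Walk.support_nil, List.mem_singleton] at hz;
            exact absurd hz hne)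
        hm hy
      rcases short with heq | hadj
      · refine ⟨r2.copy (Subtype.ext heq.symm) rfl, ?_⟩
        intro z hz
        rw [SimpleGraph.Walk.support_copy] at hz
        exact hr2 z hz
      · refine ⟨SimpleGraph.Walk.cons hadj r2, ?_⟩
        intro z hz
        rw [SimpleGraph.Walk.support_cons] at hz
        rcases List.mem_cons.1 hz with hz | hz
        · subst hz; exact hqC u (SimpleGraph.Walk.start_mem_support q)
        · exact hr2 z hz
    · refine ih hpC' (q.concat h) ?_ ?_ hu hy
      · intro z hz
        rw [SimpleGraph.Walk.support_concat, List.mem_append, List.mem_singleton] at hz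
        rcases hz with hz | hz
        · exact hqC z hz
        · subst hz; exact hmC
      · intro z hz hzu
        rw [SimpleGraph.Walk.support_concat, List.mem_append, List.mem_singleton] at hz
        rcases hz with hz | hz
        · exact hqb z hz hzu
        · subst hz; exact hm

/-- Along a torso walk inside `A ∪ B` from `A` to `B` there is a crossing edge. -/
lemma cse_cross {t : ι} {A B : Set V} (hdisj : Disjoint A B) :
    ∀ {a b : D.bag t} (r : (D.torso t).Walk a b),
      (∀ z ∈ r.support, (z : V) ∈ A ∪ B) → (a : V) ∈ A → (b : V) ∈ B →
      ∃ x : D.bag t, (x : V) ∈ A ∧ ∃ y : D.bag t, (y : V) ∈ B ∧ (D.torso t).Adj x y := by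
  intro a b r
  induction r with
  | nil =>
    intro _ ha hb
    exact absurd hb (Set.disjoint_left.1 hdisj ha)
  | @cons a m b h r ih =>
    intro hs ha hb
    rcases hs m (by simp [SimpleGraph.Walk.support_cons,
      SimpleGraph.Walk.start_mem_support]) with hmA | hmB
    · exact ih (fun z hz => hs z (by simp [SimpleGraph.Walk.support_cons, hz])) hmA hb
    · exact ⟨a, ha, m, hmB, h⟩

end CSETorso

section CSELift

open SimpleGraph

variable {V ι W0 : Type} {G : SimpleGraph V} (D : TreeDecomp G ι) {Hg : SimpleGraph W0}

lemma cse_lift_subtree_walk {S0 : Set V} :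
    ∀ {x y : V} (p : G.Walk x y), (∀ z ∈ p.support, z ∈ S0) →
      ∀ {a b : ι}, x ∈ D.bag a → y ∈ D.bag b →
      ∃ q : D.tree.Walk a b, ∀ s ∈ q.support, (S0 ∩ D.bag s).Nonempty := by
  intro x y p
  induction p with
  | nil =>
    rename_i x
    intro hp a b hxa hxb
    obtain ⟨q, hq⟩ := cse_exists_walk_of_induce_connected (D.subtree x) hxa hxb
    exact ⟨q, fun s hs => ⟨x, hp x (SimpleGraph.Walk.start_mem_support _), hq s hs⟩⟩
  | @cons x m y h p' ih =>
    intro hp a b hxa hyb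
    obtain ⟨s0, hxs0, hms0⟩ := D.covers_edge h
    have hxS : x ∈ S0 := hp x (SimpleGraph.Walk.start_mem_support _)
    obtain ⟨q1, hq1⟩ := cse_exists_walk_of_induce_connected (D.subtree x) hxa hxs0
    obtain ⟨q2, hq2⟩ := ih
      (fun z hz => hp z (by simp [SimpleGraph.Walk.support_cons, hz])) hms0 hyb
    refine ⟨q1.append q2, fun s hs => ?_⟩
    rcases (SimpleGraph.Walk.mem_support_append_iff _ _).1 hs with hs | hs
    · exact ⟨x, hxS, hq1 s hs⟩
    · exact hq2 s hs

/-- Lift a tree decomposition of `G` along a minor model to a tree decomposition of `Hg`. -/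
def cse_lift (S : W0 → Set V) (hne : ∀ w, (S w).Nonempty)
    (hconn : ∀ w, (G.induce (S w)).Connected)
    (hadj : ∀ w w', Hg.Adj w w' → ∃ x ∈ S w, ∃ y ∈ S w', G.Adj x y) :
    TreeDecomp Hg ι where
  tree := D.tree
  isTree := D.isTree
  bag t := {w | (S w ∩ D.bag t).Nonempty}
  covers_vertex w := by
    obtain ⟨x, hx⟩ := hne w
    obtain ⟨t, ht⟩ := D.covers_vertex x
    exact ⟨t, x, hx, ht⟩
  covers_edge := by
    intro w w' hww
    obtain ⟨x, hx, y, hy, hxy⟩ := hadj _ _ hww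
    obtain ⟨t, htx, hty⟩ := D.covers_edge hxy
    exact ⟨t, ⟨x, hx, htx⟩, ⟨y, hy, hty⟩⟩
  subtree w := by
    obtain ⟨x0, hx0⟩ := hne w
    obtain ⟨t0, ht0⟩ := D.covers_vertex x0
    refine @SimpleGraph.Connected.mk _ _ ?_ ⟨⟨t0, ⟨x0, hx0, ht0⟩⟩⟩
    rintro ⟨aN, xa, hxaS, hxat⟩ ⟨bN, xb, hxbS, hxbt⟩
    obtain ⟨p, hp⟩ := cse_exists_walk_of_induce_connected (hconn w) hxaS hxbS
    obtain ⟨q, hq⟩ := cse_lift_subtree_walk D p hp hxat hxbt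
    exact cse_induce_reachable_of_walk q hq _ _

/-- The torso at `t` of the lifted decomposition is a minor of the torso at `t` of `D`. -/
lemma cse_torso_minor (S : W0 → Set V) (hne : ∀ w, (S w).Nonempty)
    (hconn : ∀ w, (G.induce (S w)).Connected)
    (hdisj : ∀ w w', w ≠ w' → Disjoint (S w) (S w'))
    (hadj : ∀ w w', Hg.Adj w w' → ∃ x ∈ S w, ∃ y ∈ S w', G.Adj x y) (t : ι) :
    IsGraphMinor ((cse_lift D S hne hconn hadj).torso t) (D.torso t) := by
  refine ⟨fun w => {z : D.bag t | (z : V) ∈ S (w : W0)}, ?_, ?_, ?_, ?_⟩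
  · -- nonempty
    rintro ⟨w, x, hxS, hxt⟩
    exact ⟨⟨x, hxt⟩, hxS⟩
  · -- connectivity of branch sets
    rintro ⟨w, hw⟩
    obtain ⟨x0, hx0S, hx0t⟩ := hw
    haveI : Nonempty {z : D.bag t | (z : V) ∈ S w} := ⟨⟨⟨x0, hx0t⟩, hx0S⟩⟩
    refine SimpleGraph.Connected.mk ?_
    rintro ⟨⟨xa, hat⟩, haS⟩ ⟨⟨xb, hbt⟩, hbS⟩
    obtain ⟨p, hp⟩ := cse_exists_walk_of_induce_connected (hconn w) haS hbS
    obtain ⟨r, hr⟩ := cse_torso_walk_aux D p hp (SimpleGraph.Walk.nil : G.Walk xa xa)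
      (by intro z hz; rw [SimpleGraph.Walk.support_nil, List.mem_singleton] at hz;
          subst hz; exact haS)
      (by intro z hz hne'; rw [SimpleGraph.Walk.support_nil, List.mem_singleton] at hz;
          exact absurd hz hne')
      hat hbt
    exact cse_induce_reachable_of_walk r hr _ _
  · -- disjointness
    intro w w' hww
    rw [Set.disjoint_left]
    rintro ⟨z, hzt⟩ hz hz'
    have hvne : (w : W0) ≠ (w' : W0) := fun hh => hww (Subtype.ext hh)
    exact Set.disjoint_left.1 (hdisj _ _ hvne) hz hz'
  · -- edge realization
    intro w w' hadj'
    have hvne : (w : W0) ≠ (w' : W0) := fun hh => hadj'.ne (Subtype.ext hh)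
    have hSd : Disjoint (S (w : W0)) (S (w' : W0)) := hdisj _ _ hvne
    obtain ⟨aw, hawS, hawt⟩ := w.2
    obtain ⟨bw, hbwS, hbwt⟩ := w'.2
    -- a helper finishing from an `Hg`-edge between the underlying vertices
    have caseA : ∀ (hWadj : Hg.Adj (w : W0) (w' : W0)),
        ∃ x ∈ {z : D.bag t | (z : V) ∈ S (w : W0)},
          ∃ y ∈ {z : D.bag t | (z : V) ∈ S (w' : W0)}, (D.torso t).Adj x y := by
      intro hWadj
      obtain ⟨x0, hx0, y0, hy0, hxy⟩ := hadj _ _ hWadj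
      obtain ⟨p1, hp1⟩ := cse_exists_walk_of_induce_connected (hconn _) hawS hx0
      obtain ⟨p2, hp2⟩ := cse_exists_walk_of_induce_connected (hconn _) hy0 hbwS
      have hbig : ∀ z ∈ (p1.append (SimpleGraph.Walk.cons hxy p2)).support,
          z ∈ S (w : W0) ∪ S (w' : W0) := by
        intro z hz
        rcases (SimpleGraph.Walk.mem_support_append_iff _ _).1 hz with hz | hz
        · exact Or.inl (hp1 z hz)
        · rw [SimpleGraph.Walk.support_cons] at hz
          rcases List.mem_cons.1 hz with hz | hz
          · subst hz; exact Or.inl hx0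
          · exact Or.inr (hp2 z hz)
      obtain ⟨r, hr⟩ := cse_torso_walk_aux D _ hbig (SimpleGraph.Walk.nil : G.Walk aw aw)
        (by intro z hz; rw [SimpleGraph.Walk.support_nil, List.mem_singleton] at hz;
            subst hz; exact Or.inl hawS)
        (by intro z hz hne'; rw [SimpleGraph.Walk.support_nil, List.mem_singleton] at hz;
            exact absurd hz hne')
        hawt hbwt
      obtain ⟨x, hxA, y, hyB, hxyT⟩ := cse_cross D hSd r hr hawS hbwS
      exact ⟨x, hxA, y, hyB, hxyT⟩
    have caseB : ∀ t', D.tree.Adj t t' → (S (w : W0) ∩ D.bag t').Nonempty →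
        (S (w' : W0) ∩ D.bag t').Nonempty →
        ∃ x ∈ {z : D.bag t | (z : V) ∈ S (w : W0)},
          ∃ y ∈ {z : D.bag t | (z : V) ∈ S (w' : W0)}, (D.torso t).Adj x y := by
      rintro t' ht' ⟨a', ha'S, ha't⟩ ⟨b', hb'S, hb't⟩
      obtain ⟨z1, hz1S, hz1t, hz1t'⟩ :=
        cse_connected_meets_adhesion D (hconn _) ht' hawS hawt ha'S ha't
      obtain ⟨z2, hz2S, hz2t, hz2t'⟩ :=
        cse_connected_meets_adhesion D (hconn _) ht' hbwS hbwt hb'S hb't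
      refine ⟨⟨z1, hz1t⟩, hz1S, ⟨z2, hz2t⟩, hz2S, ?_⟩
      refine (cse_torso_adj D _ _).2 ⟨?_, Or.inl (Or.inr ⟨t', ht', hz1t', hz2t'⟩)⟩
      intro hh
      have hz12 : z1 = z2 := congrArg Subtype.val hh
      rw [hz12] at hz1S
      exact Set.disjoint_left.1 hSd hz1S hz2S
    rcases (cse_torso_adj (cse_lift D S hne hconn hadj) w w').1 hadj' with ⟨-, hor⟩
    rcases hor with (hWadj | ⟨t', ht', hwt', hw't'⟩) | (hWadj | ⟨t', ht', hw't', hwt'⟩)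
    · exact caseA hWadj
    · exact caseB t' ht' hwt' hw't'
    · exact caseA hWadj.symm
    · exact caseB t' ht' hwt' hw't'
  
end CSELift

section CSEFinal

open SimpleGraph

variable {V : Type}

/-- The trivial one-node tree decomposition. -/
def cse_trivial (G : SimpleGraph V) : TreeDecomp G Unit where
  tree := ⊥
  isTree := by
    constructor
    · refine SimpleGraph.Connected.mk fun a b => ?_
      cases a; cases b
      exact SimpleGraph.Reachable.refl _
    · exact SimpleGraph.isAcyclic_bot
  bag _ := Set.univ
  covers_vertex v := ⟨(), trivial⟩
  covers_edge u v _ := ⟨(), trivial, trivial⟩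
  subtree v := by
    haveI : Nonempty {t : Unit | v ∈ Set.univ} := ⟨⟨(), trivial⟩⟩
    refine SimpleGraph.Connected.mk fun a b => ?_
    have : a = b := Subtype.ext (Subsingleton.elim _ _)
    rw [this]

end CSEFinal

/-- the clique-sum extension of a minor-monotone graph parameter is
minor-monotone. -/
theorem cliqueSumExt_minorMonotone (p : GraphParam) (hp : MinorMonotone p) :
    MinorMonotone (cliqueSumExt p) := by
  intro V W G H hminor
  obtain ⟨S, hSne, hSconn, hSdisj, hSadj⟩ := hminor
  unfold cliqueSumExt
  have hGset : {k : ℕ | ∃ (ι : Type) (D : TreeDecomp G ι), ∀ t, p (D.torso t) ≤ k}.Nonempty :=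
    ⟨p ((cse_trivial G).torso ()), Unit, cse_trivial G, fun t => by cases t; exact le_rfl⟩
  obtain ⟨ι, D, hD⟩ := Nat.sInf_mem hGset
  apply Nat.sInf_le
  refine ⟨ι, cse_lift D S hSne hSconn hSadj, fun t => ?_⟩
  exact le_trans (hp _ _ (cse_torso_minor D S hSne hSconn hSdisj hSadj t)) (hD t)
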